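/- Let λ = e^{2πiω}, ω irrational with convergent denominators (q_j), let (h̃_n) be as above with |f_2| ≥ 1, and let q'_0 < q'_1 < ⋯ enumerate the set U = {q_j : q_{j+1} ≥ (q_j+1)²} (assumed infinite). Set n_i = ⌊q'_{i+1}/(q'_i + 1)⌋. Then h̃_{q'_{i+1}} ≥ h̃_{q'_i}^{n_i} / |λ^{q'_{i+1}} − 1| for all i. -/

import Mathlib

open Finset


/-- The iterated fractional parts of the Gauss continued fraction algorithm:
`gaussIter ω n = ω_n`. -/
noncomputable def gaussIter (ω : ℝ) : ℕ → ℝ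
  | 0 => Int.fract ω
  | n + 1 => Int.fract (gaussIter ω n)⁻¹

/-- The partial quotients of the Gauss continued fraction algorithm:
`cfA ω 0 = a₀ = ⌊ω⌋`, `cfA ω (n+1) = a_{n+1} = ⌊1/ω_n⌋`. -/
noncomputable def cfA (ω : ℝ) : ℕ → ℤ
  | 0 => ⌊ω⌋
  | n + 1 => ⌊(gaussIter ω n)⁻¹⌋

/-- Denominators of the convergents: `q₋₂ = 1`, `q₋₁ = 0`, `q_n = a_n q_{n-1} + q_{n-2}`
(so `q₀ = 1`, `q₁ = a₁`). They are positive integers. -/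
noncomputable def qden (ω : ℝ) : ℕ → ℕ
  | 0 => 1
  | 1 => (cfA ω 1).toNat
  | n + 2 => (cfA ω (n + 2)).toNat * qden ω (n + 1) + qden ω n

/-- Numerators of the convergents: `p₋₂ = 0`, `p₋₁ = 1`, `p_n = a_n p_{n-1} + p_{n-2}`
(so `p₀ = a₀`, `p₁ = a₁ a₀ + 1`). -/
noncomputable def pnum (ω : ℝ) : ℕ → ℤ
  | 0 => cfA ω 0
  | 1 => cfA ω 1 * cfA ω 0 + 1
  | n + 2 => cfA ω (n + 2) * pnum ω (n + 1) + pnum ω n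

/-- The denominators viewed as real numbers. -/
noncomputable def qr (ω : ℝ) (n : ℕ) : ℝ := (qden ω n : ℝ)


open Finset

/-- The recurrence defining the modified majorant sequence `h̃`:
`h̃₀ = 1`, `h̃_n = (1/|λ^n-1|) ∑_{m=2}^{n+1} |f_m| ∑_{n₁+⋯+n_m=n+1-m, nᵢ≥0} h̃_{n₁}⋯h̃_{n_m}`. -/
def HtildeRec (lam : ℂ) (f : ℕ → ℂ) (h : ℕ → ℝ) : Prop :=
  h 0 = 1 ∧ ∀ n : ℕ, 1 ≤ n →
    h n = (1 / ‖lam ^ n - 1‖) * ∑ m ∈ Finset.Icc 2 (n + 1),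
      ‖f m‖ * ∑ t ∈ Finset.Nat.antidiagonalTuple m (n + 1 - m), ∏ i, h (t i)

/- ### Auxiliary lemmas -/

lemma gauss_irr {ω : ℝ} (hω : Irrational ω) : ∀ n, Irrational (gaussIter ω n) := by
  intro n
  induction n with
  | zero =>
    show Irrational (Int.fract ω)
    rw [← Int.self_sub_floor]
    exact hω.sub_intCast ⌊ω⌋
  | succ n ih =>
    show Irrational (Int.fract (gaussIter ω n)⁻¹)
    rw [← Int.self_sub_floor]
    exact ih.inv.sub_intCast ⌊(gaussIter ω n)⁻¹⌋

lemma gauss_pos {ω : ℝ} (hω : Irrational ω) (n : ℕ) :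
    0 < gaussIter ω n ∧ gaussIter ω n < 1 := by
  have hne : gaussIter ω n ≠ 0 := by
    intro h0
    exact (gauss_irr hω n).ne_int 0 (by simpa using h0)
  have h01 : 0 ≤ gaussIter ω n ∧ gaussIter ω n < 1 := by
    cases n with
    | zero => exact ⟨Int.fract_nonneg _, Int.fract_lt_one _⟩
    | succ n => exact ⟨Int.fract_nonneg _, Int.fract_lt_one _⟩
  exact ⟨lt_of_le_of_ne h01.1 (Ne.symm hne), h01.2⟩

lemma cfA_pos {ω : ℝ} (hω : Irrational ω) (n : ℕ) : 1 ≤ cfA ω (n + 1) := by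
  have h := gauss_pos hω n
  have : (1 : ℝ) ≤ (gaussIter ω n)⁻¹ := by
    rw [le_inv_comm₀] <;> simp [h.1, h.2.le]
  exact Int.le_floor.2 (by exact_mod_cast this)

lemma qden_pos {ω : ℝ} (hω : Irrational ω) : ∀ n, 1 ≤ qden ω n := by
  intro n
  induction n using Nat.strong_induction_on with
  | _ n ih =>
    match n with
    | 0 => simp [qden]
    | 1 =>
      have h1 : 1 ≤ cfA ω 1 := cfA_pos hω 0
      simp only [qden]
      omega
    | (n + 2) =>
      have h1 := ih n (by omega)
      simp only [qden]
      omega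

lemma qden_mono {ω : ℝ} (hω : Irrational ω) : Monotone (qden ω) := by
  apply monotone_nat_of_le_succ
  intro n
  match n with
  | 0 => simpa [qden] using qden_pos hω 1
  | (n + 1) =>
    have h1 : 1 ≤ cfA ω (n + 2) := cfA_pos hω (n + 1)
    have h2 := qden_pos hω (n + 1)
    show qden ω (n + 1) ≤ (cfA ω (n + 2)).toNat * qden ω (n + 1) + qden ω n
    have : 1 ≤ (cfA ω (n + 2)).toNat := by omega
    nlinarith [qden_pos hω n]

section Htilde

variable {lam : ℂ} {f : ℕ → ℂ} {h : ℕ → ℝ}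

lemma h_nonneg (hrec : HtildeRec lam f h) : ∀ n, 0 ≤ h n := by
  intro n
  induction n using Nat.strong_induction_on with
  | _ n ih =>
    rcases Nat.eq_zero_or_pos n with h0 | h1
    · rw [h0, hrec.1]; norm_num
    · rw [hrec.2 n h1]
      apply mul_nonneg (by positivity)
      refine Finset.sum_nonneg fun m hm => ?_
      refine mul_nonneg (norm_nonneg _) (Finset.sum_nonneg fun t ht => ?_)
      refine Finset.prod_nonneg fun i _ => ?_
      apply ih
      have hmem := Finset.Nat.mem_antidiagonalTuple.mp ht
      have hti : t i ≤ n + 1 - m :=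
        hmem ▸ Finset.single_le_sum (fun k _ => Nat.zero_le (t k)) (Finset.mem_univ i)
      have hm2 : 2 ≤ m := (Finset.mem_Icc.mp hm).1
      omega

/-- lower bound of `h n` by a subset of the `m = 2` tuples -/
lemma h_ge_core (hrec : HtildeRec lam f h) (hf2 : 1 ≤ ‖f 2‖) {n : ℕ} (hn : 1 ≤ n)
    (s : Finset (Fin 2 → ℕ)) (hs : s ⊆ Finset.Nat.antidiagonalTuple 2 (n - 1)) :
    (∑ t ∈ s, (h (t 0) * h (t 1))) / ‖lam ^ n - 1‖ ≤ h n := by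
  have hnn := h_nonneg hrec
  have hS2 : (∑ t ∈ s, (h (t 0) * h (t 1))) ≤
      ∑ t ∈ Finset.Nat.antidiagonalTuple 2 (n + 1 - 2), ∏ i, h (t i) := by
    have hidx : n + 1 - 2 = n - 1 := by omega
    rw [hidx]
    calc (∑ t ∈ s, (h (t 0) * h (t 1)))
        = ∑ t ∈ s, ∏ i, h (t i) := by
          refine Finset.sum_congr rfl fun t _ => ?_
          rw [Fin.prod_univ_two]
      _ ≤ ∑ t ∈ Finset.Nat.antidiagonalTuple 2 (n - 1), ∏ i, h (t i) := by
          refine Finset.sum_le_sum_of_subset_of_nonneg hs fun t _ _ => ?_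
          exact Finset.prod_nonneg fun i _ => hnn _
  have hterm : ‖f 2‖ * ∑ t ∈ Finset.Nat.antidiagonalTuple 2 (n + 1 - 2), ∏ i, h (t i) ≤
      ∑ m ∈ Finset.Icc 2 (n + 1),
        ‖f m‖ * ∑ t ∈ Finset.Nat.antidiagonalTuple m (n + 1 - m), ∏ i, h (t i) := by
    refine Finset.single_le_sum (f := fun m =>
      ‖f m‖ * ∑ t ∈ Finset.Nat.antidiagonalTuple m (n + 1 - m), ∏ i, h (t i))
      (fun m _ => mul_nonneg (norm_nonneg _) (Finset.sum_nonneg fun t _ =>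
        Finset.prod_nonneg fun i _ => hnn _)) ?_
    simp only [Finset.mem_Icc]; omega
  have hSnn : 0 ≤ ∑ t ∈ Finset.Nat.antidiagonalTuple 2 (n + 1 - 2), ∏ i, h (t i) :=
    Finset.sum_nonneg fun t _ => Finset.prod_nonneg fun i _ => hnn _
  have hf2' : (∑ t ∈ Finset.Nat.antidiagonalTuple 2 (n + 1 - 2), ∏ i, h (t i)) ≤
      ‖f 2‖ * ∑ t ∈ Finset.Nat.antidiagonalTuple 2 (n + 1 - 2), ∏ i, h (t i) :=
    le_mul_of_one_le_left hSnn hf2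
  rw [hrec.2 n hn, div_eq_mul_inv, mul_comm (∑ t ∈ s, (h (t 0) * h (t 1))), ← one_div]
  have hc : (0:ℝ) ≤ 1 / ‖lam ^ n - 1‖ := by positivity
  exact mul_le_mul_of_nonneg_left (le_trans hS2 (le_trans hf2' hterm)) hc

lemma mem_adt2 {a b n : ℕ} (hab : a + b = n) :
    (![a, b] : Fin 2 → ℕ) ∈ Finset.Nat.antidiagonalTuple 2 n := by
  rw [Finset.Nat.mem_antidiagonalTuple, Fin.sum_univ_two]
  simpa using hab

lemma h_ge_single (hrec : HtildeRec lam f h) (hf2 : 1 ≤ ‖f 2‖) {n a b : ℕ} (hn : 1 ≤ n)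
    (hab : a + b = n - 1) : h a * h b / ‖lam ^ n - 1‖ ≤ h n := by
  have := h_ge_core hrec hf2 hn {![a, b]} (by
    intro t ht
    simp only [Finset.mem_singleton] at ht
    rw [ht]; exact mem_adt2 hab)
  simpa using this

lemma h_ge_double (hrec : HtildeRec lam f h) (hf2 : 1 ≤ ‖f 2‖) {n a b : ℕ} (hn : 1 ≤ n)
    (hab : a + b = n - 1) (hne : a ≠ b) :
    (h a * h b + h b * h a) / ‖lam ^ n - 1‖ ≤ h n := by
  have hnemem : (![a, b] : Fin 2 → ℕ) ≠ ![b, a] := by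
    intro hEq
    have := congrFun hEq 0
    simp at this
    exact hne this
  have := h_ge_core hrec hf2 hn {![a, b], ![b, a]} (by
    intro t ht
    simp only [Finset.mem_insert, Finset.mem_singleton] at ht
    rcases ht with ht | ht <;> rw [ht]
    · exact mem_adt2 hab
    · exact mem_adt2 (by omega))
  rw [Finset.sum_pair hnemem] at this
  simpa using this

lemma h_mono (hrec : HtildeRec lam f h) (hf2 : 1 ≤ ‖f 2‖)
    (hc : ∀ n : ℕ, 1 ≤ n → 0 < ‖lam ^ n - 1‖ ∧ ‖lam ^ n - 1‖ ≤ 2) :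
    ∀ a b : ℕ, 1 ≤ a → a ≤ b → h a ≤ h b := by
  have hnn := h_nonneg hrec
  have step : ∀ n : ℕ, 1 ≤ n → h n ≤ h (n + 1) := by
    intro n hn
    have hd := h_ge_double hrec hf2 (n := n + 1) (a := n) (b := 0) (by omega) (by omega)
      (by omega)
    rw [hrec.1] at hd
    have hcn := hc (n + 1) (by omega)
    calc h n = (h n * 1 + 1 * h n) / 2 := by ring
      _ ≤ (h n * 1 + 1 * h n) / ‖lam ^ (n + 1) - 1‖ := by
          apply div_le_div_of_nonneg_left _ hcn.1 hcn.2
          nlinarith [hnn n]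
      _ ≤ h (n + 1) := hd
  intro a b ha hab
  induction b with
  | zero => omega
  | succ b ih =>
    rcases Nat.lt_or_ge a (b + 1) with hlt | hge
    · exact le_trans (ih (by omega)) (step b (by omega))
    · have : a = b + 1 := by omega
      rw [this]

lemma h_pow_bound (hrec : HtildeRec lam f h) (hf2 : 1 ≤ ‖f 2‖)
    (hc : ∀ n : ℕ, 1 ≤ n → 0 < ‖lam ^ n - 1‖ ∧ ‖lam ^ n - 1‖ ≤ 2)
    (s : ℕ) (hs : 1 ≤ s) :
    ∀ k : ℕ, 1 ≤ k → h (s - 1) ^ k / 2 ≤ h (k * s - 1) := by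
  have hnn := h_nonneg hrec
  intro k
  induction k with
  | zero => omega
  | succ k ih =>
    intro _
    rcases Nat.eq_zero_or_pos k with hk0 | hk1
    · subst hk0
      simp only [Nat.zero_add, pow_one, one_mul]
      linarith [hnn (s - 1)]
    · -- k ≥ 1
      have hmul : (k + 1) * s = k * s + s := by ring
      have hks1 : 1 ≤ k * s := by
        have := Nat.mul_le_mul hk1 hs
        omega
      have hcn := hc ((k + 1) * s - 1) (by omega)
      rcases Nat.eq_or_lt_of_le hk1 with hk1' | hk2
      · -- k = 1 : single tuple (s-1, s-1)
        have hkss : k * s = s := by rw [← hk1']; exact one_mul s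
        have habk : (s - 1) + (s - 1) = (k + 1) * s - 1 - 1 := by omega
        have hsingle := h_ge_single hrec hf2 (n := (k + 1) * s - 1) (by omega) habk
        calc h (s - 1) ^ (k + 1) / 2 = h (s - 1) * h (s - 1) / 2 := by
              rw [← hk1']; ring
          _ ≤ h (s - 1) * h (s - 1) / ‖lam ^ ((k + 1) * s - 1) - 1‖ := by
              apply div_le_div_of_nonneg_left _ hcn.1 hcn.2
              nlinarith [hnn (s - 1)]
          _ ≤ h ((k + 1) * s - 1) := hsingle
      · -- k ≥ 2 : two distinct tuples (k*s-1, s-1), (s-1, k*s-1)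
        have h2s : 2 * s ≤ k * s := Nat.mul_le_mul_right s hk2
        have hne : k * s - 1 ≠ s - 1 := by omega
        have habk : (k * s - 1) + (s - 1) = (k + 1) * s - 1 - 1 := by omega
        have hdouble := h_ge_double hrec hf2 (n := (k + 1) * s - 1) (by omega) habk hne
        have hih := ih hk1
        calc h (s - 1) ^ (k + 1) / 2 = (h (s - 1) ^ k / 2) * h (s - 1) := by ring
          _ ≤ h (k * s - 1) * h (s - 1) := by
              apply mul_le_mul_of_nonneg_right hih (hnn _)
          _ = (h (k * s - 1) * h (s - 1) + h (s - 1) * h (k * s - 1)) / 2 := by ring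
          _ ≤ (h (k * s - 1) * h (s - 1) + h (s - 1) * h (k * s - 1)) /
                ‖lam ^ ((k + 1) * s - 1) - 1‖ := by
              apply div_le_div_of_nonneg_left _ hcn.1 hcn.2
              nlinarith [hnn (k * s - 1), hnn (s - 1)]
          _ ≤ h ((k + 1) * s - 1) := hdouble

end Htilde

lemma lam_facts {ω : ℝ} (hω : Irrational ω) {lam : ℂ}
    (hlam : lam = Complex.exp (2 * Real.pi * Complex.I * ω)) :
    ∀ n : ℕ, 1 ≤ n → 0 < ‖lam ^ n - 1‖ ∧ ‖lam ^ n - 1‖ ≤ 2 := by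
  intro n hn
  have habs : ‖lam‖ = 1 := by
    rw [hlam, Complex.norm_exp]
    have hre : (2 * (Real.pi : ℂ) * Complex.I * (ω : ℂ)).re = 0 := by
      simp [Complex.mul_re, Complex.mul_im]
    rw [hre, Real.exp_zero]
  constructor
  · rw [norm_pos_iff, sub_ne_zero]
    intro hEq
    have : Complex.exp ((n : ℂ) * (2 * Real.pi * Complex.I * ω)) = 1 := by
      rw [Complex.exp_nat_mul, ← hlam, hEq]
    rw [Complex.exp_eq_one_iff] at this
    obtain ⟨m, hm⟩ := this
    have hπ : (2 * Real.pi * Complex.I : ℂ) ≠ 0 := by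
      simp [Complex.I_ne_zero, Real.pi_ne_zero]
    have hcancel : (n : ℂ) * ω = m :=
      mul_right_cancel₀ hπ (by linear_combination hm)
    have hreal : (n : ℝ) * ω = m := by exact_mod_cast hcancel
    have hn0 : ((n : ℝ)) ≠ 0 := by positivity
    have hωeq : ω = (m : ℝ) / (n : ℝ) := by
      rw [eq_div_iff hn0]
      linear_combination hreal
    rw [hωeq] at hω
    exact (Rat.not_irrational ((m : ℚ) / (n : ℚ))) (by push_cast; exact hω)
  · calc ‖lam ^ n - 1‖ ≤ ‖lam ^ n‖ + ‖(1 : ℂ)‖ := norm_sub_le _ _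
      _ = 2 := by rw [norm_pow, habs]; norm_num

/-- with `q'_i = q_{j(i)}` enumerating (in increasing order) the set
`U = {q_j : q_{j+1} ≥ (q_j+1)²}` and `n_i = ⌊q'_{i+1}/(q'_i+1)⌋`, one has
`h̃_{q'_{i+1}} ≥ h̃_{q'_i}^{n_i} / |λ^{q'_{i+1}} - 1|`. -/
theorem stmt15 (ω : ℝ) (hω : Irrational ω) (lam : ℂ)
    (hlam : lam = Complex.exp (2 * Real.pi * Complex.I * ω))
    (f : ℕ → ℂ) (hf2 : 1 ≤ ‖f 2‖)
    (h : ℕ → ℝ) (hrec : HtildeRec lam f h)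
    (j : ℕ → ℕ) (hjmono : StrictMono j)
    (hjU : ∀ i : ℕ, (qden ω (j i) + 1) ^ 2 ≤ qden ω (j i + 1))
    (hjall : ∀ l : ℕ, (qden ω l + 1) ^ 2 ≤ qden ω (l + 1) → ∃ i, j i = l) :
    ∀ i : ℕ,
      h (qden ω (j i)) ^ (qden ω (j (i + 1)) / (qden ω (j i) + 1)) /
          ‖lam ^ (qden ω (j (i + 1))) - 1‖ ≤
        h (qden ω (j (i + 1))) := by
  intro i
  have hc := lam_facts hω hlam
  have hnn := h_nonneg hrec
  set q := qden ω (j i) with hq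
  set N := qden ω (j (i + 1)) with hN
  set s := q + 1 with hs
  set k := N / s with hk
  have hs1 : 1 ≤ s := by omega
  have hNs2 : s ^ 2 ≤ N := by
    calc s ^ 2 ≤ qden ω (j i + 1) := hjU i
      _ ≤ N := qden_mono hω (hjmono i.lt_succ_self)
  have hq1 : 1 ≤ q := qden_pos hω (j i)
  have hs2 : 2 ≤ s := by omega
  have hks : k * s ≤ N := by
    rw [hk, mul_comm]; exact Nat.mul_div_le N s
  have hk1 : s ≤ k := by
    rw [hk]
    rw [Nat.le_div_iff_mul_le (by omega)]
    nlinarith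
  have hkk : 1 ≤ k := by omega
  have hN4 : 4 ≤ N := by nlinarith
  -- step 1: h (s-1) ^ k / 2 ≤ h (k*s - 1)
  have hstep1 := h_pow_bound hrec hf2 hc s hs1 k hkk
  have hks2 : 2 ≤ k * s := by nlinarith
  -- step 2: h (k*s - 1) ≤ h (N - 1)
  have hstep2 : h (k * s - 1) ≤ h (N - 1) := by
    apply h_mono hrec hf2 hc _ _ (by omega) (by omega)
  -- step 3
  have hstep3 := h_ge_double hrec hf2 (n := N) (a := N - 1) (b := 0) (by omega)
    (by omega) (by omega)
  rw [hrec.1] at hstep3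
  have hsq : s - 1 = q := by omega
  rw [hsq] at hstep1
  have hcN := hc N (by omega)
  have hstep12 : h q ^ k / 2 ≤ h (N - 1) := le_trans hstep1 hstep2
  calc h q ^ k / ‖lam ^ N - 1‖
      = (h q ^ k / 2) * 2 / ‖lam ^ N - 1‖ := by ring
    _ ≤ h (N - 1) * 2 / ‖lam ^ N - 1‖ :=
        div_le_div_of_nonneg_right (by linarith) hcN.1.le
    _ = (h (N - 1) * 1 + 1 * h (N - 1)) / ‖lam ^ N - 1‖ := by ring
    _ ≤ h N := hstep3
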